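/- For α ≥ 4, the substitution t = ((α+1)s+α−1)/(2(2s+α−2)) gives ∫_{(8+α²−α√(α²+16))/32}^{1} dt/√((1−t)(α²t−(4t−1)²)) = ∫_{(−(α+4)+√(α²+16))/4}^{1} ds/√((1−s)(2s+α−2)(2s²+(α+4)s+α)). -/

import Mathlib

open Real intervalIntegral

section AuxHelpers

open MeasureTheory Set

lemma aux_int_right (a b C : ℝ) (hab : a < b) (f : ℝ → ℝ)
    (hm : AEStronglyMeasurable f (volume.restrict (Ioc a b)))
    (hb : ∀ x ∈ Ioc a b, ‖f x‖ ≤ C / Real.sqrt (x - a)) :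
    IntegrableOn f (Ioc a b) := by
  have hint : IntervalIntegrable (fun x => C * (x - a) ^ (-(1/2) : ℝ)) volume a b := by
    have h0 : IntervalIntegrable (fun x : ℝ => x ^ (-(1/2) : ℝ)) volume 0 (b - a) :=
      intervalIntegrable_rpow' (by norm_num)
    have h1 := (h0.comp_sub_right a).const_mul C
    simpa using h1
  have hg : IntegrableOn (fun x => C * (x - a) ^ (-(1/2) : ℝ)) (Ioc a b) :=
    (intervalIntegrable_iff_integrableOn_Ioc_of_le hab.le).mp hint
  refine Integrable.mono' hg hm ?_
  rw [MeasureTheory.ae_restrict_iff' measurableSet_Ioc]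
  refine Filter.Eventually.of_forall (fun x hx => ?_)
  refine (hb x hx).trans (le_of_eq ?_)
  have hxa : 0 < x - a := by linarith [hx.1]
  rw [Real.rpow_neg hxa.le, Real.sqrt_eq_rpow, div_eq_mul_inv]

lemma aux_int_left (a b C : ℝ) (hab : a < b) (f : ℝ → ℝ)
    (hm : AEStronglyMeasurable f (volume.restrict (Ico a b)))
    (hb : ∀ x ∈ Ico a b, ‖f x‖ ≤ C / Real.sqrt (b - x)) :
    IntegrableOn f (Ico a b) := by
  have hint : IntervalIntegrable (fun x => C * (b - x) ^ (-(1/2) : ℝ)) volume a b := by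
    have h0 : IntervalIntegrable (fun x : ℝ => x ^ (-(1/2) : ℝ)) volume 0 (b - a) :=
      intervalIntegrable_rpow' (by norm_num)
    have h1 := ((h0.comp_sub_left b).const_mul C).symm
    simpa using h1
  have hg : IntegrableOn (fun x => C * (b - x) ^ (-(1/2) : ℝ)) (Ico a b) := by
    have := (intervalIntegrable_iff_integrableOn_Icc_of_le (μ := volume) hab.le).mp hint
    exact this.mono_set Ico_subset_Icc_self
  refine Integrable.mono' hg hm ?_
  rw [MeasureTheory.ae_restrict_iff' measurableSet_Ico]
  refine Filter.Eventually.of_forall (fun x hx => ?_)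
  refine (hb x hx).trans (le_of_eq ?_)
  have hxa : 0 < b - x := by linarith [hx.2]
  rw [Real.rpow_neg hxa.le, Real.sqrt_eq_rpow, div_eq_mul_inv]

open Real intervalIntegral

section AuxHelpers

open MeasureTheory Set

lemma aux_main (a b c : ℝ) (hab : a < b) (hc : 0 < c) (g : ℝ → ℝ) (hgc : Continuous g)
    (hg : ∀ x ∈ Ioo a b, c * ((b - x) * (x - a)) ≤ g x) :
    IntegrableOn (fun x => 1 / Real.sqrt (g x)) (Icc a b) := by
  set m := (a + b) / 2 with hm
  have ham : a < m := by rw [hm]; linarith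
  have hma : 0 < m - a := by linarith
  have hbm : 0 < b - m := by linarith
  have hmb : m < b := by rw [hm]; linarith
  have hmeas : AEStronglyMeasurable (fun x => 1 / Real.sqrt (g x)) (volume.restrict (Ioc a m)) ∧
      AEStronglyMeasurable (fun x => 1 / Real.sqrt (g x)) (volume.restrict (Ico m b)) := by
    have : Measurable (fun x => 1 / Real.sqrt (g x)) := by
      simp only [one_div]
      exact (Real.continuous_sqrt.comp hgc).measurable.inv
    exact ⟨this.aestronglyMeasurable, this.aestronglyMeasurable⟩
  have key : ∀ x ∈ Ioo a b, ∀ d : ℝ, 0 < d → d ≤ c * (b - x) →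
      ‖1 / Real.sqrt (g x)‖ ≤ (1 / Real.sqrt d) / Real.sqrt (x - a) := by
    intro x hx d hd hdle
    have hxa : 0 < x - a := by linarith [hx.1]
    have hlow : d * (x - a) ≤ g x := by
      refine le_trans ?_ (hg x hx)
      have : d * (x - a) ≤ (c * (b - x)) * (x - a) :=
        mul_le_mul_of_nonneg_right hdle hxa.le
      linarith [this]
    have hdx : 0 < d * (x - a) := mul_pos hd hxa
    have h1 : Real.sqrt (d * (x - a)) ≤ Real.sqrt (g x) := Real.sqrt_le_sqrt hlow
    have h2 : 0 < Real.sqrt (d * (x - a)) := Real.sqrt_pos.mpr hdx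
    rw [Real.norm_eq_abs, abs_of_nonneg (by positivity)]
    calc 1 / Real.sqrt (g x) ≤ 1 / Real.sqrt (d * (x - a)) :=
          one_div_le_one_div_of_le h2 h1
      _ = (1 / Real.sqrt d) / Real.sqrt (x - a) := by
          rw [Real.sqrt_mul hd.le]
          rw [one_div, mul_inv, div_eq_mul_inv, one_div]
  have h1 : IntegrableOn (fun x => 1 / Real.sqrt (g x)) (Ioc a m) := by
    refine aux_int_right a m (1 / Real.sqrt (c * (b - m))) ham (fun x => 1 / Real.sqrt (g x))
      hmeas.1 (fun x hx => ?_)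
    exact key x ⟨hx.1, lt_of_le_of_lt hx.2 hmb⟩ (c * (b - m))
      (by positivity) (by nlinarith [hx.2])
  have h2 : IntegrableOn (fun x => 1 / Real.sqrt (g x)) (Ico m b) := by
    refine aux_int_left m b (1 / Real.sqrt (c * (m - a))) hmb (fun x => 1 / Real.sqrt (g x))
      hmeas.2 (fun x hx => ?_)
    -- mirrored bound: g x ≥ c*(b-x)*(x-a) ≥ (c*(m-a))*(b-x)
    have hxb : 0 < b - x := by linarith [hx.2]
    have hxa : a < x := lt_of_lt_of_le ham hx.1
    have hlow : (c * (m - a)) * (b - x) ≤ g x := by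
      refine le_trans ?_ (hg x ⟨hxa, hx.2⟩)
      nlinarith [mul_nonneg (mul_nonneg hc.le hxb.le) (show (0:ℝ) ≤ x - m by linarith [hx.1])]
    have hdx : 0 < (c * (m - a)) * (b - x) := by positivity
    have h1' : Real.sqrt ((c * (m - a)) * (b - x)) ≤ Real.sqrt (g x) := Real.sqrt_le_sqrt hlow
    have h2' : 0 < Real.sqrt ((c * (m - a)) * (b - x)) := Real.sqrt_pos.mpr hdx
    rw [Real.norm_eq_abs, abs_of_nonneg (by positivity)]
    calc 1 / Real.sqrt (g x) ≤ 1 / Real.sqrt ((c * (m - a)) * (b - x)) :=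
          one_div_le_one_div_of_le h2' h1'
      _ = (1 / Real.sqrt (c * (m - a))) / Real.sqrt (b - x) := by
          rw [Real.sqrt_mul (by positivity)]
          rw [one_div, mul_inv, div_eq_mul_inv, one_div]
  rw [integrableOn_Icc_iff_integrableOn_Ioo]
  refine (h1.union h2).mono_set ?_
  intro x hx
  rcases le_or_gt x m with h | h
  · exact Or.inl ⟨hx.1, h⟩
  · exact Or.inr ⟨h.le, hx.2⟩
end AuxHelpers

set_option maxHeartbeats 1000000 in
/-- For `α ≥ 4`, the substitution `t = ((α+1)s+α−1)/(2(2s+α−2))` gives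
`∫_{(8+α²−α√(α²+16))/32}^{1} dt/√((1−t)(α²t−(4t−1)²))
  = ∫_{(−(α+4)+√(α²+16))/4}^{1} ds/√((1−s)(2s+α−2)(2s²+(α+4)s+α))`. -/
theorem cycle_identity_Q_R (α : ℝ) (h : 4 ≤ α) :
    ∫ t in ((8 + α ^ 2 - α * Real.sqrt (α ^ 2 + 16)) / 32)..1,
        1 / Real.sqrt ((1 - t) * (α ^ 2 * t - (4 * t - 1) ^ 2)) =
      ∫ s in ((-(α + 4) + Real.sqrt (α ^ 2 + 16)) / 4)..1,
        1 / Real.sqrt ((1 - s) * (2 * s + α - 2) * (2 * s ^ 2 + (α + 4) * s + α)) := by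
  have hα0 : (0:ℝ) < α := by linarith
  have h16 : (0:ℝ) ≤ α ^ 2 + 16 := by positivity
  set r := Real.sqrt (α ^ 2 + 16) with hrdef
  have hr2 : r ^ 2 = α ^ 2 + 16 := Real.sq_sqrt h16
  have hr0 : 0 < r := Real.sqrt_pos.mpr (by positivity)
  have hrα : α < r := by nlinarith
  have hr4 : r < α + 4 := by nlinarith
  have hr8 : 0 < α - 8 + r := by nlinarith
  have hαr : α * α < α * r := mul_lt_mul_of_pos_left hrα hα0
  set s0 : ℝ := (-(α + 4) + r) / 4 with hs0
  set t0 : ℝ := (8 + α ^ 2 - α * r) / 32 with ht0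
  have hs01 : s0 < 1 := by rw [hs0]; nlinarith
  have ht01 : t0 < 1 := by rw [ht0]; nlinarith
  have hD0 : ∀ s : ℝ, s0 ≤ s → 0 < 2 * s + α - 2 := by
    intro s hs; rw [hs0] at hs; nlinarith
  set φ : ℝ → ℝ := fun s => ((α + 1) * s + (α - 1)) / (2 * (2 * s + α - 2)) with hφ
  set φd : ℝ → ℝ := fun s => α * (α - 3) / (2 * (2 * s + α - 2) ^ 2) with hφd
  set g : ℝ → ℝ := fun t => 1 / Real.sqrt ((1 - t) * (α ^ 2 * t - (4 * t - 1) ^ 2)) with hgdef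
  have huIcc : Set.uIcc s0 1 = Set.Icc s0 1 := Set.uIcc_of_le hs01.le
  have hmin : min s0 1 = s0 := min_eq_left hs01.le
  have hmax : max s0 (1:ℝ) = 1 := max_eq_right hs01.le
  -- key algebraic identity
  have hiden : ∀ s : ℝ, 2 * s + α - 2 ≠ 0 →
      (1 - φ s) * (α ^ 2 * φ s - (4 * φ s - 1) ^ 2)
        = (φd s) ^ 2 * ((1 - s) * (2 * s + α - 2) * (2 * s ^ 2 + (α + 4) * s + α)) := by
    intro s hs
    simp only [hφ, hφd]
    have hs' : s * 2 + α - 2 ≠ 0 := by contrapose! hs; linarith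
    field_simp
    ring
  have hφdpos : ∀ s : ℝ, 2 * s + α - 2 ≠ 0 → 0 < φd s := by
    intro s hs
    simp only [hφd]
    have h3 : (0:ℝ) < α - 3 := by linarith
    positivity
  have hφ1 : φ 1 = 1 := by
    simp only [hφ]
    rw [div_eq_one_iff_eq (by intro hc; nlinarith)]
    ring
  have hDs0 : (0:ℝ) < 2 * s0 + α - 2 := hD0 s0 le_rfl
  have hφs0 : φ s0 = t0 := by
    simp only [hφ]
    rw [div_eq_iff (show (0:ℝ) < 2 * (2 * s0 + α - 2) by positivity).ne']
    rw [hs0, ht0]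
    linear_combination (α / 32) * hr2
  -- pointwise identity
  have hpt : ∀ s : ℝ, s0 ≤ s → φd s * g (φ s)
      = 1 / Real.sqrt ((1 - s) * (2 * s + α - 2) * (2 * s ^ 2 + (α + 4) * s + α)) := by
    intro s hs
    have hD := hD0 s hs
    have hp := hφdpos s hD.ne'
    simp only [hgdef]
    rw [hiden s hD.ne']
    rw [Real.sqrt_mul (sq_nonneg _), Real.sqrt_sq hp.le]
    rw [one_div, mul_inv, ← mul_assoc, mul_inv_cancel₀ hp.ne', one_mul, one_div]
  -- monotonicity helper
  have hmono : ∀ s1 s2 : ℝ, 2 * s1 + α - 2 ≠ 0 → 2 * s2 + α - 2 ≠ 0 →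
      φ s2 - φ s1 = (2 * α * (α - 3) * (s2 - s1)) /
        ((2 * (2 * s1 + α - 2)) * (2 * (2 * s2 + α - 2))) := by
    intro s1 s2 h1 h2
    simp only [hφ]
    have h2' : s2 * 2 + α - 2 ≠ 0 := by contrapose! h2; linarith
    have h1' : s1 * 2 + α - 2 ≠ 0 := by contrapose! h1; linarith
    field_simp
    ring
  -- continuity of φ
  have hfc : ContinuousOn φ (Set.uIcc s0 1) := by
    rw [huIcc]
    simp only [hφ]
    apply ContinuousOn.div (by fun_prop) (by fun_prop)
    intro x hx
    have := hD0 x hx.1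
    positivity
  -- derivative
  have hderiv : ∀ x ∈ Set.Ioo s0 (1:ℝ), HasDerivWithinAt φ (φd x) (Set.Ioi x) x := by
    intro x hx
    have hD := hD0 x hx.1.le
    have h1 : HasDerivAt (fun s : ℝ => (α + 1) * s + (α - 1)) (α + 1) x := by
      simpa using ((hasDerivAt_id x).const_mul (α + 1)).add_const (α - 1)
    have h2 : HasDerivAt (fun s : ℝ => 2 * (2 * s + α - 2)) 4 x := by
      have h2' := ((((hasDerivAt_id x).const_mul 2).add_const α).sub_const 2).const_mul 2
      norm_num at h2'
      convert h2' using 1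
    have h3 : HasDerivAt φ (φd x) x := by
      simp only [hφ, hφd]
      have hne : 2 * (2 * x + α - 2) ≠ 0 := by positivity
      have h4 := h1.div h2 hne
      refine h4.congr_deriv ?_
      rw [div_eq_div_iff (by positivity) (by positivity)]
      ring
    exact h3.hasDerivWithinAt
  -- continuity of g on image
  have hgcont : ContinuousOn g (φ '' Set.Ioo s0 1) := by
    rintro t ⟨s, hs, rfl⟩
    have hD := hD0 s hs.1.le
    have hp := hφdpos s hD.ne'
    have hQpos : 0 < 2 * s ^ 2 + (α + 4) * s + α := by
      have h4 : r < 4 * s + α + 4 := by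
        have := hs.1; rw [hs0] at this; linarith
      nlinarith [mul_self_lt_mul_self hr0.le h4, hr2]
    have h1s : 0 < 1 - s := by linarith [hs.2]
    have hpos : 0 < (1 - φ s) * (α ^ 2 * φ s - (4 * φ s - 1) ^ 2) := by
      rw [hiden s hD.ne']
      positivity
    have hc : ContinuousAt g (φ s) := by
      simp only [hgdef]
      apply ContinuousAt.div continuousAt_const (by fun_prop)
      exact (Real.sqrt_pos.mpr hpos).ne'
    exact hc.continuousWithinAt
  -- image subset
  have hsub : φ '' Set.uIcc s0 1 ⊆ Set.Icc t0 1 := by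
    rw [huIcc]
    rintro t ⟨s, hs, rfl⟩
    have hD := hD0 s hs.1
    constructor
    · rw [← hφs0]
      have := hmono s0 s hDs0.ne' hD.ne'
      have hnum : 0 ≤ (2 * α * (α - 3) * (s - s0)) /
          ((2 * (2 * s0 + α - 2)) * (2 * (2 * s + α - 2))) := by
        have h3 : (0:ℝ) < α - 3 := by linarith
        have hss : 0 ≤ s - s0 := by linarith [hs.1]
        positivity
      linarith [this, hnum]
    · rw [← hφ1]
      have hD1 : (0:ℝ) < 2 * 1 + α - 2 := by linarith
      have := hmono s 1 hD.ne' hD1.ne'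
      have hnum : 0 ≤ (2 * α * (α - 3) * (1 - s)) /
          ((2 * (2 * s + α - 2)) * (2 * (2 * 1 + α - 2))) := by
        have h3 : (0:ℝ) < α - 3 := by linarith
        have hss : 0 ≤ 1 - s := by linarith [hs.2]
        positivity
      linarith [this, hnum]
  -- integrability on Icc t0 1
  have hInt1 : MeasureTheory.IntegrableOn g (Set.Icc t0 1) := by
    simp only [hgdef]
    have hc1 : (0:ℝ) < (α ^ 2 - 24 + α * r) / 2 := by nlinarith
    refine aux_main t0 1 ((α ^ 2 - 24 + α * r) / 2) ht01 hc1
      (fun t => (1 - t) * (α ^ 2 * t - (4 * t - 1) ^ 2)) (by fun_prop) ?_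
    intro t ht
    have hid : (1 - t) * (α ^ 2 * t - (4 * t - 1) ^ 2)
        - ((α ^ 2 - 24 + α * r) / 2) * ((1 - t) * (t - t0))
        = 16 * (t - t0) * (1 - t) ^ 2 := by
      rw [ht0]
      linear_combination (-(α ^ 2) * (1 - t) / 64) * hr2
    nlinarith [mul_nonneg (sub_nonneg.mpr ht.1.le) (sq_nonneg (1 - t))]
  have hg1 : MeasureTheory.IntegrableOn g (φ '' Set.uIcc s0 1) := hInt1.mono_set hsub
  -- integrability of RHS integrand
  have hInt2 : MeasureTheory.IntegrableOn
      (fun s => 1 / Real.sqrt ((1 - s) * (2 * s + α - 2) * (2 * s ^ 2 + (α + 4) * s + α)))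
      (Set.Icc s0 1) := by
    refine aux_main s0 1 (r * (α - 8 + r) / 2) hs01
      (div_pos (mul_pos hr0 hr8) two_pos)
      (fun s => (1 - s) * (2 * s + α - 2) * (2 * s ^ 2 + (α + 4) * s + α)) (by fun_prop) ?_
    intro s hsint
    have hA : (0:ℝ) ≤ 1 - s := by linarith [hsint.2]
    have hB : (0:ℝ) ≤ s - s0 := by linarith [hsint.1]
    have hquad : r * (s - s0) ≤ 2 * s ^ 2 + (α + 4) * s + α := by
      have hq : 2 * s ^ 2 + (α + 4) * s + α - r * (s - s0) = 2 * (s - s0) ^ 2 := by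
        rw [hs0]
        linear_combination hr2 / 8
      nlinarith [sq_nonneg (s - s0)]
    have hDge : (α - 8 + r) / 2 ≤ 2 * s + α - 2 := by
      have := hsint.1; rw [hs0] at this; linarith
    have hQ0 : (0:ℝ) ≤ 2 * s ^ 2 + (α + 4) * s + α :=
      le_trans (by positivity) hquad
    calc (r * (α - 8 + r) / 2) * ((1 - s) * (s - s0))
        = ((1 - s) * ((α - 8 + r) / 2)) * (r * (s - s0)) := by ring
      _ ≤ ((1 - s) * ((α - 8 + r) / 2)) * (2 * s ^ 2 + (α + 4) * s + α) := by
          refine mul_le_mul_of_nonneg_left hquad ?_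
          positivity
      _ ≤ ((1 - s) * (2 * s + α - 2)) * (2 * s ^ 2 + (α + 4) * s + α) :=
          mul_le_mul_of_nonneg_right (mul_le_mul_of_nonneg_left hDge hA) hQ0
      _ = (1 - s) * (2 * s + α - 2) * (2 * s ^ 2 + (α + 4) * s + α) := by ring
  have hg2 : MeasureTheory.IntegrableOn (fun x => φd x • (g ∘ φ) x) (Set.uIcc s0 1) := by
    rw [huIcc]
    refine hInt2.congr_fun ?_ measurableSet_Icc
    intro s hs
    simp only [Function.comp, smul_eq_mul]
    exact (hpt s hs.1).symm
  have main := intervalIntegral.integral_comp_smul_deriv''' (a := s0) (b := 1) (f := φ)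
      (f' := φd) (g := g) hfc (by rw [hmin, hmax]; exact hderiv)
      (by rw [hmin, hmax]; exact hgcont) hg1 hg2
  rw [hφs0, hφ1] at main
  rw [← main]
  apply intervalIntegral.integral_congr
  intro s hs
  rw [huIcc] at hs
  simp only [Function.comp, smul_eq_mul]
  exact hpt s hs.1
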